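/- Let ν₁, ν₂, ν₃, ν₄, t₁, t₃ be real numbers with ν₂ ≠ 0 and ν₃ ≠ 0, and set t₂ = −(ν₂/4)·t₃ and t₄ = −(ν₄/4)·t₁. Let N be the 2×4 real matrix with first row (2(4t₂ + ν₂t₃), 4(4t₂t₃ − ν₂), ν₁(4 − ν₂t₂t₃), 2ν₁(ν₂t₂ + 4t₃)) and second row (2(ν₄t₁ + 4t₄), ν₃(4 − ν₄t₁t₄), 4(4t₁t₄ − ν₄), 2ν₃(4t₁ + ν₄t₄)). Then every 2×2 minor of N vanishes if and only if both P₂₃ = ν₂ν₄(ν₁ν₂ν₃ν₄ − 256)·t₁²t₃² + 16ν₄(ν₁ν₃ν₄ − 16ν₂)·t₁² + 16ν₂(ν₁ν₂ν₃ − 16ν₄)·t₃² + 256(ν₁ν₃ − ν₂ν₄) = 0 and P₂₄ = ν₁ν₄²(ν₂² − 16)·t₁²t₃ + 16ν₂(ν₄² − 16)·t₁t₃² + 16ν₂(ν₄² − 16)·t₁ + 16ν₁(ν₂² − 16)·t₃ = 0. -/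
import Mathlib


/-- Linear-dependence case `t₂ = −ν₂t₃/4`, `t₄ = −ν₄t₁/4`: the rank-one condition on
`N` is equivalent to the two polynomial equations `P₂₃ = 0` and `P₂₄ = 0`. -/
theorem stmt_17 (ν₁ ν₂ ν₃ ν₄ t₁ t₃ : ℝ) (hν₂ : ν₂ ≠ 0) (hν₃ : ν₃ ≠ 0)
    (t₂ t₄ : ℝ) (ht₂ : t₂ = -(ν₂ / 4) * t₃) (ht₄ : t₄ = -(ν₄ / 4) * t₁)
    (N : Matrix (Fin 2) (Fin 4) ℝ)
    (hN : N = !![2 * (4 * t₂ + ν₂ * t₃), 4 * (4 * t₂ * t₃ - ν₂),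
        ν₁ * (4 - ν₂ * t₂ * t₃), 2 * ν₁ * (ν₂ * t₂ + 4 * t₃);
      2 * (ν₄ * t₁ + 4 * t₄), ν₃ * (4 - ν₄ * t₁ * t₄),
        4 * (4 * t₁ * t₄ - ν₄), 2 * ν₃ * (4 * t₁ + ν₄ * t₄)]) :
    (∀ i j : Fin 4, N 0 i * N 1 j - N 0 j * N 1 i = 0) ↔
    (ν₂ * ν₄ * (ν₁ * ν₂ * ν₃ * ν₄ - 256) * t₁ ^ 2 * t₃ ^ 2 +
        16 * ν₄ * (ν₁ * ν₃ * ν₄ - 16 * ν₂) * t₁ ^ 2 +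
        16 * ν₂ * (ν₁ * ν₂ * ν₃ - 16 * ν₄) * t₃ ^ 2 +
        256 * (ν₁ * ν₃ - ν₂ * ν₄) = 0 ∧
      ν₁ * ν₄ ^ 2 * (ν₂ ^ 2 - 16) * t₁ ^ 2 * t₃ +
        16 * ν₂ * (ν₄ ^ 2 - 16) * t₁ * t₃ ^ 2 +
        16 * ν₂ * (ν₄ ^ 2 - 16) * t₁ +
        16 * ν₁ * (ν₂ ^ 2 - 16) * t₃ = 0) := by
  have mset : ∀ k : Fin 4, N 0 k = ![2 * (4 * t₂ + ν₂ * t₃), 4 * (4 * t₂ * t₃ - ν₂),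
      ν₁ * (4 - ν₂ * t₂ * t₃), 2 * ν₁ * (ν₂ * t₂ + 4 * t₃)] k ∧
      N 1 k = ![2 * (ν₄ * t₁ + 4 * t₄), ν₃ * (4 - ν₄ * t₁ * t₄),
      4 * (4 * t₁ * t₄ - ν₄), 2 * ν₃ * (4 * t₁ + ν₄ * t₄)] k := by
    intro k
    rw [hN]
    constructor <;>
      simp only [Matrix.of_apply, Matrix.cons_val', Matrix.empty_val',
        Matrix.cons_val_fin_one, Matrix.cons_val_zero, Matrix.cons_val_one,
        Matrix.head_cons, Matrix.head_fin_const]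
  have e0 : N 0 0 = 0 := by rw [(mset 0).1, ht₂]; simp only [Matrix.cons_val_zero, Matrix.cons_val_one, Matrix.cons_val_two, Matrix.cons_val_three, Nat.succ_eq_add_one, Nat.reduceAdd, Matrix.tail_cons, Matrix.head_cons]; ring
  have e1 : N 0 1 = -4 * ν₂ * (t₃ ^ 2 + 1) := by rw [(mset 1).1, ht₂]; simp only [Matrix.cons_val_zero, Matrix.cons_val_one, Matrix.cons_val_two, Matrix.cons_val_three, Nat.succ_eq_add_one, Nat.reduceAdd, Matrix.tail_cons, Matrix.head_cons]; ring
  have e2 : N 0 2 = ν₁ * (4 + ν₂ ^ 2 * t₃ ^ 2 / 4) := by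
    rw [(mset 2).1, ht₂]; simp only [Matrix.cons_val_zero, Matrix.cons_val_one, Matrix.cons_val_two, Matrix.cons_val_three, Nat.succ_eq_add_one, Nat.reduceAdd, Matrix.tail_cons, Matrix.head_cons]; ring
  have e3 : N 0 3 = 2 * ν₁ * t₃ * (4 - ν₂ ^ 2 / 4) := by
    rw [(mset 3).1, ht₂]; simp only [Matrix.cons_val_zero, Matrix.cons_val_one, Matrix.cons_val_two, Matrix.cons_val_three, Nat.succ_eq_add_one, Nat.reduceAdd, Matrix.tail_cons, Matrix.head_cons]; ring
  have f0 : N 1 0 = 0 := by rw [(mset 0).2, ht₄]; simp only [Matrix.cons_val_zero, Matrix.cons_val_one, Matrix.cons_val_two, Matrix.cons_val_three, Nat.succ_eq_add_one, Nat.reduceAdd, Matrix.tail_cons, Matrix.head_cons]; ring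
  have f1 : N 1 1 = ν₃ * (4 + ν₄ ^ 2 * t₁ ^ 2 / 4) := by
    rw [(mset 1).2, ht₄]; simp only [Matrix.cons_val_zero, Matrix.cons_val_one, Matrix.cons_val_two, Matrix.cons_val_three, Nat.succ_eq_add_one, Nat.reduceAdd, Matrix.tail_cons, Matrix.head_cons]; ring
  have f2 : N 1 2 = -4 * ν₄ * (t₁ ^ 2 + 1) := by rw [(mset 2).2, ht₄]; simp only [Matrix.cons_val_zero, Matrix.cons_val_one, Matrix.cons_val_two, Matrix.cons_val_three, Nat.succ_eq_add_one, Nat.reduceAdd, Matrix.tail_cons, Matrix.head_cons]; ring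
  have f3 : N 1 3 = 2 * ν₃ * t₁ * (4 - ν₄ ^ 2 / 4) := by
    rw [(mset 3).2, ht₄]; simp only [Matrix.cons_val_zero, Matrix.cons_val_one, Matrix.cons_val_two, Matrix.cons_val_three, Nat.succ_eq_add_one, Nat.reduceAdd, Matrix.tail_cons, Matrix.head_cons]; ring
  constructor
  · intro h
    have h12 := h 1 2
    have h13 := h 1 3
    rw [e1, e2, f1, f2] at h12
    rw [e1, e3, f1, f3] at h13
    refine ⟨by linear_combination (-16 : ℝ) * h12, ?_⟩
    have key := mul_left_cancel₀ hν₃ (b := ν₁ * ν₄ ^ 2 * (ν₂ ^ 2 - 16) * t₁ ^ 2 * t₃ +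
        16 * ν₂ * (ν₄ ^ 2 - 16) * t₁ * t₃ ^ 2 + 16 * ν₂ * (ν₄ ^ 2 - 16) * t₁ +
        16 * ν₁ * (ν₂ ^ 2 - 16) * t₃) (c := 0) (by linear_combination (8 : ℝ) * h13)
    simpa using key
  · rintro ⟨hA, hB⟩ i j
    have hden : ν₂ * (t₃ ^ 2 + 1) ≠ 0 := mul_ne_zero hν₂ (by positivity)
    have h23 : ν₁ * (4 + ν₂ ^ 2 * t₃ ^ 2 / 4) * (2 * ν₃ * t₁ * (4 - ν₄ ^ 2 / 4)) -
        2 * ν₁ * t₃ * (4 - ν₂ ^ 2 / 4) * (-4 * ν₄ * (t₁ ^ 2 + 1)) = 0 := by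
      have key : ν₂ * (t₃ ^ 2 + 1) *
          (ν₁ * (4 + ν₂ ^ 2 * t₃ ^ 2 / 4) * (2 * ν₃ * t₁ * (4 - ν₄ ^ 2 / 4)) -
            2 * ν₁ * t₃ * (4 - ν₂ ^ 2 / 4) * (-4 * ν₄ * (t₁ ^ 2 + 1))) = 0 := by
        linear_combination (-ν₁ * ν₃ * (4 + ν₂ ^ 2 * t₃ ^ 2 / 4) / 32) * hB +
          (-ν₁ * t₃ * (4 - ν₂ ^ 2 / 4) / 32) * hA
      exact (mul_eq_zero.mp key).resolve_left hden
    fin_cases i <;> fin_cases j <;>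
      simp only [Fin.zero_eta, Fin.mk_one, Fin.isValue, Fin.reduceFinMk,
        e0, e1, e2, e3, f0, f1, f2, f3]
    · ring
    · ring
    · ring
    · ring
    · ring
    · ring
    · linear_combination (-(1:ℝ)/16) * hA
    · linear_combination (ν₃/8) * hB
    · ring
    · linear_combination ((1:ℝ)/16) * hA
    · ring
    · linear_combination h23
    · ring
    · linear_combination (-ν₃/8) * hB
    · linear_combination -h23
    · ring
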